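/- For every integer k ≥ 1, if T is a 2k-strong tournament such that for every pair of distinct vertices x, y there is a directed path of length 2 from x to y or from y to x, then T is (k+2)*-weakly connected; that is, between every pair of distinct vertices of T there exist k+2 internally disjoint directed paths (each in either direction) whose union contains every vertex of T. -/

import Mathlib

variable {V : Type*}

/-- A tournament relation: irreflexive, and between any two distinct vertices
exactly one of the two possible arcs is present. -/
def IsTournament (r : V → V → Prop) : Prop :=
  (∀ v : V, ¬ r v v) ∧ ∀ u v : V, u ≠ v → (r u v ↔ ¬ r v u)

/-- Strong connectivity: every vertex reaches every other by a directed walk. -/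
def StronglyConnected (r : V → V → Prop) : Prop :=
  ∀ u v : V, Relation.ReflTransGen r u v

/-- `k`-strong: at least `k+1` vertices, and deleting any set of fewer than `k`
vertices leaves a strongly connected digraph. -/
def KStrong [Fintype V] (r : V → V → Prop) (k : ℕ) : Prop :=
  k + 1 ≤ Fintype.card V ∧
    ∀ S : Set V, S.ncard < k → ∀ u v : V, u ∉ S → v ∉ S →
      Relation.ReflTransGen (fun a b => a ∉ S ∧ b ∉ S ∧ r a b) u v

/-- A directed path from `u` to `v`, recorded as its (nodup) list of vertices. -/
def IsDipath (r : V → V → Prop) (u v : V) (p : List V) : Prop :=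
  p.Chain' r ∧ p.Nodup ∧ p.head? = some u ∧ p.getLast? = some v

/-- A Hamiltonian directed path from `u` to `v`: a directed path containing
every vertex. -/
def IsHamDipath (r : V → V → Prop) (u v : V) (p : List V) : Prop :=
  IsDipath r u v p ∧ ∀ w : V, w ∈ p

/-- A family of paths between `x` and `y` is internally disjoint if two distinct
paths share no vertex other than `x` and `y`. -/
def InternallyDisjoint (x y : V) {k : ℕ} (ps : Fin k → List V) : Prop :=
  ∀ i j : Fin k, i ≠ j → ∀ w : V, w ∈ ps i → w ∈ ps j → w = x ∨ w = y

/-- A strong `k*`-container between `x` and `y`: `k` internally disjoint directed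
paths, all from `x` to `y` or all from `y` to `x`, whose union contains every
vertex. -/
def StrongStarContainer (r : V → V → Prop) (x y : V) (k : ℕ) : Prop :=
  ∃ ps : Fin k → List V, Function.Injective ps ∧
    ((∀ i, IsDipath r x y (ps i)) ∨ (∀ i, IsDipath r y x (ps i))) ∧
    InternallyDisjoint x y ps ∧ (∀ w : V, ∃ i, w ∈ ps i)

/-- A weak `k*`-container between `x` and `y`: `k` internally disjoint directed
paths, each from `x` to `y` or from `y` to `x`, whose union contains every
vertex. -/
def WeakStarContainer (r : V → V → Prop) (x y : V) (k : ℕ) : Prop :=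
  ∃ ps : Fin k → List V, Function.Injective ps ∧
    (∀ i, IsDipath r x y (ps i) ∨ IsDipath r y x (ps i)) ∧
    InternallyDisjoint x y ps ∧ (∀ w : V, ∃ i, w ∈ ps i)

/-- The irregularity of the digraph is at most `k`:
`|d⁺(x) − d⁻(x)| ≤ k` for every vertex `x`. -/
def IrregularityLE (r : V → V → Prop) (k : ℕ) : Prop :=
  ∀ x : V, ((({y : V | r x y}.ncard : ℤ) - ({y : V | r y x}.ncard : ℤ)).natAbs) ≤ k

section AuxStmt7
open Relation List
variable {r : V → V → Prop}
lemma chain'_iff_isChain {R : V → V → Prop} {l : List V} : l.Chain' R ↔ l.IsChain R := Iff.rfl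

def IsCyc (r : V → V → Prop) (p : List V) : Prop :=
  p.Chain' r ∧ p.Nodup ∧ 2 ≤ p.length ∧ ∃ a b, p.head? = some a ∧ p.getLast? = some b ∧ r b a

lemma cyc_rotate {p : List V} (hcyc : IsCyc r p) {z : V} (hz : z ∈ p) :
    ∃ q, IsCyc r q ∧ q.head? = some z ∧ q.length = p.length ∧ ∀ v, v ∈ q ↔ v ∈ p := by
  obtain ⟨l₁, l₂, rfl⟩ := List.append_of_mem hz
  obtain ⟨hch, hnd, hlen, a, b, hha, hlb, hr⟩ := hcyc
  have hb : (z :: l₂).getLast? = some b := by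
    rw [List.getLast?_append_of_ne_nil _ (List.cons_ne_nil _ _)] at hlb; exact hlb
  rcases l₁ with _ | ⟨w, l₁⟩
  · refine ⟨z :: l₂, ⟨by simpa using hch, by simpa using hnd, by simpa using hlen,
      z, b, rfl, hb, ?_⟩, rfl, by simp, by simp⟩
    have : a = z := by simpa using hha.symm
    exact this ▸ hr
  · have hwa : w = a := by simpa using hha
    have hrz : r b w := hwa ▸ hr
    have hperm : ((z :: l₂) ++ (w :: l₁)).Perm ((w :: l₁) ++ (z :: l₂)) := List.perm_append_comm
    rw [chain'_iff_isChain, List.isChain_append] at hch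
    obtain ⟨h1, h2, h3⟩ := hch
    have hlast : ((z :: l₂) ++ (w :: l₁)).getLast? = (w :: l₁).getLast? :=
      List.getLast?_append_of_ne_nil _ (List.cons_ne_nil _ _)
    refine ⟨(z :: l₂) ++ (w :: l₁), ⟨?_, hperm.nodup_iff.mpr hnd, ?_, ?_⟩, by simp, ?_, ?_⟩
    · rw [chain'_iff_isChain, List.isChain_append]
      refine ⟨h2, h1, ?_⟩
      intro u hu v hv
      rw [hb] at hu; simp at hu hv
      subst hu; subst hv; exact hrz
    · have := hperm.length_eq; simp at this ⊢; omega
    · refine ⟨z, (w :: l₁).getLast (List.cons_ne_nil _ _), by simp, ?_, ?_⟩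
      · rw [hlast, List.getLast?_eq_getLast (List.cons_ne_nil _ _)]
      · exact h3 _ (by rw [List.getLast?_eq_getLast (List.cons_ne_nil _ _)]; simp) z (by simp)
    · exact hperm.length_eq
    · intro v; constructor <;> intro h <;> simp at h ⊢ <;> tauto

section basic
variable (hT : IsTournament r)
include hT

lemma tneq {u v : V} (h : r u v) : u ≠ v := by
  rintro rfl; exact hT.1 u h

lemma tasym {u v : V} (h : r u v) : ¬ r v u := by
  rcases eq_or_ne u v with rfl | hne
  · exact absurd h (hT.1 u)
  · exact ((hT.2 u v hne).mp h)

lemma ttotal {u v : V} (hne : u ≠ v) : r u v ∨ r v u := by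
  by_cases h : r v u
  · exact Or.inr h
  · exact Or.inl ((hT.2 u v hne).mpr h)

end basic

lemma last_sat {P : V → Prop} : ∀ {l : List V}, (∃ a ∈ l, P a) →
    ∃ l₁ a l₂, l = l₁ ++ a :: l₂ ∧ P a ∧ ∀ b ∈ l₂, ¬ P b := by
  classical
  intro l
  induction l with
  | nil => rintro ⟨a, ha, -⟩; simp at ha
  | cons c t ih =>
    rintro ⟨a, ha, hPa⟩
    by_cases ht : ∃ a ∈ t, P a
    · obtain ⟨l₁, a', l₂, rfl, hh1, hh2⟩ := ih ht
      exact ⟨c :: l₁, a', l₂, rfl, hh1, hh2⟩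
    · push_neg at ht
      have hac : a = c := by
        rcases List.mem_cons.mp ha with h | h
        · exact h
        · exact absurd hPa (ht a h)
      exact ⟨[], c, t, rfl, hac ▸ hPa, ht⟩

lemma mem_of_getLast?' {l : List V} {b : V} (h : l.getLast? = some b) : b ∈ l := by
  cases l with
  | nil => simp at h
  | cons c t =>
    rw [List.getLast?_eq_getLast (List.cons_ne_nil _ _)] at h
    simp only [Option.some_inj] at h
    exact h ▸ List.getLast_mem _

lemma mem_of_head?' {l : List V} {b : V} (h : l.head? = some b) : b ∈ l := by
  cases l with
  | nil => simp at h
  | cons c t => simp at h; simp [h]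

lemma rtg_invariant {rel : V → V → Prop} (P : V → Prop)
    (hclosed : ∀ a b, P a → rel a b → P b) {u v : V}
    (h : Relation.ReflTransGen rel u v) (hu : P u) : P v := by
  induction h with
  | refl => exact hu
  | tail h₁ h₂ ih => exact hclosed _ _ ih h₂

lemma rtg_first {rel : V → V → Prop} {u v : V}
    (h : Relation.ReflTransGen rel u v) (hne : u ≠ v) : ∃ w, rel u w := by
  rcases h.cases_head with h | ⟨w, hw, _⟩
  · exact absurd h hne
  · exact ⟨w, hw⟩

lemma rtg_last {rel : V → V → Prop} {u v : V}
    (h : Relation.ReflTransGen rel u v) (hne : u ≠ v) : ∃ w, rel w v := by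
  rcases h.cases_tail with h | ⟨w, _, hw⟩
  · exact absurd h.symm hne
  · exact ⟨w, hw⟩

lemma cyc_insert (hT : IsTournament r) {p : List V} (hcyc : IsCyc r p) {v : V} (hv : v ∉ p)
    (hin : ∃ u ∈ p, r u v) (hout : ∃ u ∈ p, r v u) :
    ∃ q, IsCyc r q ∧ p.length < q.length := by
  obtain ⟨z, hzp, hvz⟩ := hout
  obtain ⟨q₀, hq₀, hhead, hqlen, hqmem⟩ := cyc_rotate hcyc hzp
  have hin' : ∃ u ∈ q₀, r u v := by obtain ⟨u, hu1, hu2⟩ := hin; exact ⟨u, (hqmem u).mpr hu1, hu2⟩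
  obtain ⟨l₁, a, l₂, heq, hPa, hlno⟩ := last_sat hin'
  obtain ⟨hch, hnd, hlen2, a0, b0, hh0, hl0, hr0⟩ := hq₀
  have hz0 : a0 = z := by rw [hhead] at hh0; simpa using hh0.symm
  subst hz0
  have hvq₀ : v ∉ q₀ := fun h => hv ((hqmem v).mp h)
  subst heq
  rcases l₂ with _ | ⟨c, l₂'⟩
  · -- a is last; q := q₀ ++ [v]
    refine ⟨(l₁ ++ [a]) ++ [v], ⟨?_, ?_, ?_, ?_⟩, ?_⟩
    · rw [chain'_iff_isChain, List.isChain_append]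
      refine ⟨hch, List.isChain_singleton v, ?_⟩
      intro u hu w hw
      rw [List.getLast?_concat] at hu; simp at hu hw; subst hu; subst hw; exact hPa
    · rw [List.nodup_append]; exact ⟨hnd, List.nodup_singleton v, fun b hb c hc => by simp at hc; subst hc; exact fun h => hvq₀ (h ▸ hb)⟩
    · simp
    · refine ⟨a0, v, ?_, List.getLast?_concat, ?_⟩
      · rw [List.head?_append]; rw [hh0]; rfl
      · -- r v (head) = r v a0 where a0 = z
        exact hvz
    · simp at hqlen ⊢; omega
  · -- insert between a and c
    have hrc : r v c := by
      have hcne : c ≠ v := by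
        intro h; subst h; exact hvq₀ (by simp)
      rcases ttotal hT hcne with h | h
      · exact absurd h (hlno c (by simp))
      · exact h
    rw [chain'_iff_isChain, List.isChain_append] at hch
    obtain ⟨hc1, hc2, hc3⟩ := hch
    rw [List.isChain_cons_cons] at hc2
    refine ⟨l₁ ++ a :: v :: c :: l₂', ⟨?_, ?_, ?_, ?_⟩, ?_⟩
    · rw [chain'_iff_isChain, List.isChain_append]
      exact ⟨hc1, by rw [List.isChain_cons_cons, List.isChain_cons_cons]; exact ⟨hPa, hrc, hc2.2⟩, by simpa using hc3⟩
    · have hperm2 : (l₁ ++ a :: v :: c :: l₂').Perm (v :: (l₁ ++ a :: c :: l₂')) := by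
        have := List.perm_middle (a := v) (l₁ := l₁ ++ [a]) (l₂ := c :: l₂')
        simpa using this
      exact hperm2.nodup_iff.mpr (List.nodup_cons.mpr ⟨hvq₀, hnd⟩)
    · simp; omega
    · refine ⟨a0, b0, ?_, ?_, hr0⟩
      · rw [List.head?_append] at hh0 ⊢; simpa using hh0
      · rw [List.getLast?_append_of_ne_nil _ (List.cons_ne_nil _ _)] at hl0 ⊢
        rw [List.getLast?_cons_cons] at hl0 ⊢
        simpa using hl0
    · simp at hqlen ⊢; omega

lemma cyc_extend (hT : IsTournament r) (hs : StronglyConnected r) {p : List V}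
    (hcyc : IsCyc r p) {v₀ : V} (hv₀ : v₀ ∉ p) :
    ∃ q, IsCyc r q ∧ p.length < q.length := by
  classical
  by_cases hmix : ∃ v, v ∉ p ∧ (∃ u ∈ p, r u v) ∧ (∃ u ∈ p, r v u)
  · obtain ⟨v, hv, hin, hout⟩ := hmix
    exact cyc_insert hT hcyc hv hin hout
  · push_neg at hmix
    -- every outside vertex is AllIn or AllOut
    have hclass : ∀ v, v ∉ p → (∀ u ∈ p, r u v) ∨ (∀ u ∈ p, r v u) := by
      intro v hv
      by_cases hex : ∃ u ∈ p, r u v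
      · left
        intro u hu
        rcases ttotal hT (fun he : u = v => hv (he ▸ hu)) with h' | h'
        · exact h'
        · exact absurd h' (hmix v hv hex u hu)
      · right
        intro u hu
        push_neg at hex
        rcases ttotal hT (fun he : u = v => hv (he ▸ hu)) with h' | h'
        · exact absurd h' (hex u hu)
        · exact h'
    have hpne : p ≠ [] := by
      obtain ⟨-, -, hlen2, -⟩ := hcyc; intro h; subst h; simp at hlen2
    set z := p.head hpne with hz
    have hzp : z ∈ p := List.head_mem hpne
    set Vin : V → Prop := fun v => v ∉ p ∧ ∀ u ∈ p, r u v with hVin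
    set Vout : V → Prop := fun v => v ∉ p ∧ ∀ u ∈ p, r v u with hVout
    by_cases harc : ∃ w u, Vin w ∧ Vout u ∧ r w u
    · obtain ⟨w, u, hw, hu, hwu⟩ := harc
      obtain ⟨hch, hnd, hlen2, a0, b0, hh0, hl0, hr0⟩ := hcyc
      refine ⟨p ++ [w, u], ⟨?_, ?_, ?_, ?_⟩, by simp⟩
      · rw [chain'_iff_isChain, List.isChain_append]
        refine ⟨hch, by simp [hwu], ?_⟩
        intro s hsl t ht
        simp at ht; subst ht
        rw [hl0] at hsl; simp at hsl; subst hsl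
        exact hw.2 b0 (mem_of_getLast?' hl0)
      · rw [List.nodup_append]
        refine ⟨hnd, by simp [tneq hT hwu], ?_⟩
        intro s hsp s' hmem hss; subst hss
        simp only [List.mem_cons, List.not_mem_nil, or_false] at hmem
        rcases hmem with rfl | rfl
        · exact hw.1 hsp
        · exact hu.1 hsp
      · simp
      · refine ⟨a0, u, by rw [List.head?_append, hh0]; rfl, ?_, ?_⟩
        · rw [List.getLast?_append_of_ne_nil _ (by simp)]; rfl
        · exact hu.2 a0 (mem_of_head?' hh0)
    · exfalso
      push_neg at harc
      rcases hclass v₀ hv₀ with hvin | hvout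
      · -- v₀ ∈ Vin; Vin is closed under arcs; v₀ cannot reach z
        have hinv := rtg_invariant (rel := r) Vin ?_ (hs v₀ z) ⟨hv₀, hvin⟩
        · exact hinv.1 hzp
        · intro a b ha hab
          by_cases hbp : b ∈ p
          · exact absurd hab (tasym hT (ha.2 b hbp) )
          · rcases hclass b hbp with h | h
            · exact ⟨hbp, h⟩
            · exact absurd hab (fun hh => harc a b ⟨ha.1, ha.2⟩ ⟨hbp, h⟩ hh)
      · -- v₀ ∈ Vout; complement of Vout is closed; z cannot reach v₀
        have hinv := rtg_invariant (rel := r) (fun v => ¬ Vout v) ?_ (hs z v₀)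
          (fun h => h.1 hzp)
        · exact hinv ⟨hv₀, hvout⟩
        · intro a b ha hab hbout
          by_cases hap : a ∈ p
          · exact tasym hT (hbout.2 a hap) hab
          · rcases hclass a hap with h | h
            · exact harc a b ⟨hap, h⟩ hbout hab
            · exact ha ⟨hap, h⟩

lemma cyc_exists (hT : IsTournament r) (hs : StronglyConnected r)
    (hne : ∃ u w : V, u ≠ w) : ∃ p, IsCyc r p := by
  classical
  obtain ⟨u, w, huw⟩ := hne
  obtain ⟨a, hva⟩ := rtg_first (hs u w) huw
  obtain ⟨b, hbv⟩ := rtg_last (hs w u) (Ne.symm huw)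
  by_cases harc : ∃ s t, r u s ∧ r t u ∧ r s t
  · obtain ⟨s, t, h1, h2, h3⟩ := harc
    refine ⟨[u, s, t], ⟨?_, ?_, by simp, u, t, rfl, rfl, h2⟩⟩
    · rw [chain'_iff_isChain, List.isChain_cons_cons, List.isChain_cons_cons]; exact ⟨h1, h3, List.isChain_singleton t⟩
    · have hus : u ≠ s := tneq hT h1
      have hst : s ≠ t := tneq hT h3
      have hut : u ≠ t := by
        intro he; rw [he] at h2; exact hT.1 t h2
      simp [hus, hst, hut]
  · exfalso
    push_neg at harc
    have hinv := rtg_invariant (rel := r) (fun d => d = u ∨ r u d) ?_ (hs u b) (Or.inl rfl)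
    · rcases hinv with h | h
      · exact (hT.1 u) (h ▸ hbv)
      · exact tasym hT h hbv
    · intro c d hc hcd
      rcases hc with rfl | hc
      · exact Or.inr hcd
      · rcases eq_or_ne d u with rfl | hdu
        · exact absurd hcd (tasym hT hc)
        · rcases ttotal hT (Ne.symm hdu) with h | h
          · exact Or.inr h
          · exact absurd hcd (fun hh => harc c d hc h hh)

theorem ham_cycle [Fintype V] (hT : IsTournament r) (hs : StronglyConnected r)
    (hne : ∃ u w : V, u ≠ w) : ∃ p, IsCyc r p ∧ ∀ v : V, v ∈ p := by
  classical
  obtain ⟨p₀, hp₀⟩ := cyc_exists hT hs hne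
  suffices h : ∀ n (p : List V), IsCyc r p → Fintype.card V ≤ p.length + n → ∃ q, IsCyc r q ∧ ∀ v : V, v ∈ q by
    exact h (Fintype.card V) p₀ hp₀ (by omega)
  intro n
  induction n with
  | zero =>
    intro p hp hcard
    refine ⟨p, hp, ?_⟩
    have : p.toFinset = Finset.univ := by
      apply Finset.eq_univ_of_card
      have h1 : p.toFinset.card = p.length := List.toFinset_card_of_nodup hp.2.1
      have h2 : p.toFinset.card ≤ Fintype.card V := Finset.card_le_univ _
      omega
    intro v
    have : v ∈ p.toFinset := this ▸ Finset.mem_univ v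
    simpa using this
  | succ n ih =>
    intro p hp hcard
    by_cases hall : ∀ v : V, v ∈ p
    · exact ⟨p, hp, hall⟩
    · push_neg at hall
      obtain ⟨v, hv⟩ := hall
      obtain ⟨q, hq, hlt⟩ := cyc_extend hT hs hp hv
      exact ih q hq (by omega)

lemma lift_subtype {W : Finset V} {u : V} (hu : u ∉ W) :
    ∀ {v}, Relation.ReflTransGen (fun a b => a ∉ (↑W : Set V) ∧ b ∉ (↑W : Set V) ∧ r a b) u v →
    ∀ (hv : v ∉ W), Relation.ReflTransGen (fun (a b : {z : V // z ∉ W}) => r a.1 b.1) ⟨u, hu⟩ ⟨v, hv⟩ := by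
  intro v h
  induction h with
  | refl => intro hv; exact Relation.ReflTransGen.refl
  | @tail c d h₁ h₂ ih =>
    intro hv
    have hc : c ∉ W := by simpa using h₂.1
    exact Relation.ReflTransGen.tail (ih hc) h₂.2.2

lemma span_two_paths [Fintype V] (hT : IsTournament r) {W : Finset V}
    (hsc : StronglyConnected (fun (a b : {z : V // z ∉ W}) => r a.1 b.1))
    {x y : V} (hx : x ∉ W) (hy : y ∉ W) (hxy : x ≠ y) :
    ∃ P₁ P₂ : List V, IsDipath r x y P₁ ∧ IsDipath r y x P₂ ∧
      (∀ v, v ∉ W → v ∈ P₁ ∨ v ∈ P₂) ∧ (∀ v ∈ P₁, v ∉ W) ∧ (∀ v ∈ P₂, v ∉ W) ∧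
      (∀ w, w ∈ P₁ → w ∈ P₂ → w = x ∨ w = y) ∧
      P₁.head? = some x ∧ P₂.head? = some y := by
  classical
  have hT' : IsTournament (fun (a b : {z : V // z ∉ W}) => r a.1 b.1) := by
    refine ⟨fun v => hT.1 v.1, fun u v huv => hT.2 u.1 v.1 (fun h => huv (Subtype.ext h))⟩
  obtain ⟨p', hp', hall⟩ := ham_cycle hT' hsc
    ⟨⟨x, hx⟩, ⟨y, hy⟩, fun h => hxy (congrArg Subtype.val h)⟩
  set p : List V := p'.map Subtype.val with hpdef
  have hcyc : IsCyc r p := by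
    obtain ⟨hch, hnd, hlen, a, b, hha, hlb, hr⟩ := hp'
    refine ⟨?_, hnd.map Subtype.val_injective, by simpa [hpdef] using hlen, a.1, b.1, ?_, ?_, hr⟩
    · rw [hpdef, chain'_iff_isChain, List.isChain_map]; exact hch
    · rw [hpdef, List.head?_map, hha]; rfl
    · rw [hpdef, List.getLast?_map, hlb]; rfl
  have hmemp : ∀ v : V, v ∈ p ↔ v ∉ W := by
    intro v
    constructor
    · intro h; obtain ⟨z, hz, rfl⟩ := List.mem_map.mp h; exact z.2
    · intro h; exact List.mem_map.mpr ⟨⟨v, h⟩, hall _, rfl⟩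
  obtain ⟨q, hq, hqhead, hqlen, hqmem⟩ := cyc_rotate hcyc ((hmemp x).mpr hx)
  obtain ⟨hch, hnd, hlen2, a0, b0, hh0, hl0, hr0⟩ := hq
  have ha0 : a0 = x := by rw [hqhead] at hh0; simpa using hh0.symm
  rw [ha0] at hr0 hh0
  -- q = x :: tq
  obtain ⟨tq, rfl⟩ : ∃ tq, q = x :: tq := by
    cases q with
    | nil => simp at hqhead
    | cons c t => simp at hqhead; exact ⟨t, by rw [hqhead]⟩
  have hytq : y ∈ tq := by
    have : y ∈ x :: tq := (hqmem y).mpr ((hmemp y).mpr hy)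
    rcases List.mem_cons.mp this with h | h
    · exact absurd h.symm hxy
    · exact h
  obtain ⟨s, t, rfl⟩ := List.append_of_mem hytq
  -- q = (x :: s) ++ (y :: t)
  have hqe : x :: (s ++ y :: t) = (x :: s) ++ (y :: t) := by simp
  rw [hqe] at hch hnd hl0 hqmem
  rw [chain'_iff_isChain, List.isChain_append] at hch
  obtain ⟨ch1, ch2, hj⟩ := hch
  rw [List.nodup_append] at hnd
  obtain ⟨nd1, nd2, ndisj⟩ := hnd
  have hb0 : (y :: t).getLast? = some b0 := by
    rwa [List.getLast?_append_of_ne_nil _ (List.cons_ne_nil _ _)] at hl0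
  refine ⟨(x :: s) ++ [y], (y :: t) ++ [x], ⟨?_, ?_, ?_, List.getLast?_concat⟩,
    ⟨?_, ?_, ?_, List.getLast?_concat⟩, ?_, ?_, ?_, ?_, ?_, ?_⟩
  · rw [chain'_iff_isChain, List.isChain_append]
    refine ⟨ch1, List.isChain_singleton y, ?_⟩
    intro u hu w hw
    simp only [List.head?_cons, Option.mem_some_iff] at hw
    subst hw
    exact hj u hu y (by simp)
  · rw [List.nodup_append]
    refine ⟨nd1, List.nodup_singleton y, ?_⟩
    intro w hw w' hmem hww; subst hww
    simp only [List.mem_cons, List.not_mem_nil, or_false] at hmem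
    subst hmem
    exact ndisj _ hw _ (by simp) rfl
  · rw [List.head?_append, List.head?_cons]; rfl
  · rw [chain'_iff_isChain, List.isChain_append]
    refine ⟨ch2, List.isChain_singleton x, ?_⟩
    intro u hu w hw
    simp only [List.head?_cons, Option.mem_some_iff] at hw
    subst hw
    rw [hb0] at hu
    simp only [Option.mem_some_iff] at hu
    subst hu
    exact hr0
  · rw [List.nodup_append]
    refine ⟨nd2, List.nodup_singleton x, ?_⟩
    intro w hw w' hmem hww; subst hww
    simp only [List.mem_cons, List.not_mem_nil, or_false] at hmem
    exact ndisj _ (show w ∈ x :: s by simp [hmem]) _ hw rfl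
  · rw [List.head?_append, List.head?_cons]; rfl
  · intro v hv
    have : v ∈ (x :: s) ++ (y :: t) := (hqmem v).mpr ((hmemp v).mpr hv)
    rcases List.mem_append.mp this with h | h
    · exact Or.inl (List.mem_append.mpr (Or.inl h))
    · exact Or.inr (List.mem_append.mpr (Or.inl h))
  · intro v hv
    rcases List.mem_append.mp hv with h | h
    · exact (hmemp v).mp ((hqmem v).mp (List.mem_append.mpr (Or.inl h)))
    · simp at h; subst h; exact hy
  · intro v hv
    rcases List.mem_append.mp hv with h | h
    · exact (hmemp v).mp ((hqmem v).mp (List.mem_append.mpr (Or.inr h)))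
    · simp at h; subst h; exact hx
  · intro w hw1 hw2
    rcases List.mem_append.mp hw1 with h1 | h1
    · rcases List.mem_append.mp hw2 with h2 | h2
      · exact absurd rfl (ndisj _ h1 _ h2)
      · simp at h2; exact Or.inl h2
    · simp at h1; exact Or.inr h1
  · rw [List.head?_append, List.head?_cons]; rfl
  · rw [List.head?_append, List.head?_cons]; rfl

section main
variable [Fintype V] {k : ℕ}

lemma card_ge (hT : IsTournament r) (hstrong : KStrong r (2*k)) (hk : 1 ≤ k) :
    2*k + 2 ≤ Fintype.card V := by
  classical
  by_contra hlt
  push_neg at hlt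
  have hcard := hstrong.1
  obtain ⟨u, v, huv⟩ := Fintype.exists_pair_of_one_lt_card (α := V) (by omega)
  have hncard : (↑(({u, v} : Finset V)ᶜ) : Set V).ncard < 2*k := by
    rw [Set.ncard_coe_finset, Finset.card_compl, Finset.card_pair huv]
    omega
  set S : Set V := ↑(({u, v} : Finset V)ᶜ) with hS
  have huS : u ∉ S := by rw [hS]; simp
  have hvS : v ∉ S := by rw [hS]; simp
  have h1 : r v u := by
    obtain ⟨w, hw⟩ := rtg_first (hstrong.2 S hncard v u hvS huS) (Ne.symm huv)
    obtain ⟨-, hwS, hrvw⟩ := hw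
    have hmem2 : w = u ∨ w = v := by
      by_contra hcon
      push_neg at hcon
      exact hwS (by rw [hS]; simp [hcon.1, hcon.2])
    rcases hmem2 with rfl | rfl
    · exact hrvw
    · exact absurd hrvw (hT.1 _)
  have h2 : r u v := by
    obtain ⟨w, hw⟩ := rtg_first (hstrong.2 S hncard u v huS hvS) huv
    obtain ⟨-, hwS, hrvw⟩ := hw
    have hmem2 : w = u ∨ w = v := by
      by_contra hcon
      push_neg at hcon
      exact hwS (by rw [hS]; simp [hcon.1, hcon.2])
    rcases hmem2 with rfl | rfl
    · exact absurd hrvw (hT.1 _)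
    · exact hrvw
  exact tasym hT h1 h2

lemma indeg_big (hT : IsTournament r) (hstrong : KStrong r (2*k))
    (hcard : 2*k + 2 ≤ Fintype.card V) (y0 : V)
    [DecidablePred (fun v => r v y0)]
    (hsmall : (Finset.univ.filter (fun v => r v y0)).card < 2*k) : False := by
  classical
  set N : Finset V := Finset.univ.filter (fun v => r v y0) with hN
  have hne : (N ∪ {y0}) ≠ Finset.univ := by
    intro h
    have h1 : (N ∪ {y0}).card ≤ 2*k + 1 := le_trans (Finset.card_union_le _ _) (by simp; omega)
    rw [h, Finset.card_univ] at h1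
    omega
  have hcne : ((N ∪ {y0})ᶜ : Finset V).Nonempty := by
    rw [← Finset.card_pos, Finset.card_compl]
    have h1 : (N ∪ {y0}).card ≤ 2*k + 1 := le_trans (Finset.card_union_le _ _) (by simp; omega)
    omega
  obtain ⟨u, hu⟩ := hcne
  rw [Finset.mem_compl, Finset.mem_union] at hu
  push_neg at hu
  have huN : u ∉ N := hu.1
  have huy : u ≠ y0 := by simpa using hu.2
  have hyN : y0 ∉ N := by simp [hN, hT.1 y0]
  have hpath := hstrong.2 ↑N (by rw [Set.ncard_coe_finset]; exact hsmall) u y0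
    (by simpa using huN) (by simpa using hyN)
  obtain ⟨c, hcS, -, hrc⟩ := rtg_last hpath huy
  exact hcS (by simp [hN, hrc])

lemma sub_strong (hstrong : KStrong r (2*k)) (W : Finset V) (hW : W.card < 2*k) :
    StronglyConnected (fun (a b : {z : V // z ∉ W}) => r a.1 b.1) := by
  intro u v
  have := lift_subtype (r := r) u.2
    (hstrong.2 ↑W (by rwa [Set.ncard_coe_finset]) u.1 v.1 (by simpa using u.2) (by simpa using v.2)) v.2
  simpa using this

end main

section greedy
variable [Fintype V] {k : ℕ} {x y : V}

-- abbreviations (as plain defs to keep things readable)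
def GoodV (r : V → V → Prop) (x y v : V) : Prop := (r x v ∧ r v y) ∨ (r y v ∧ r v x)
def AV (r : V → V → Prop) (x y v : V) : Prop := r x v ∧ r y v
def BV (r : V → V → Prop) (x y v : V) : Prop := r v x ∧ r v y

lemma classify (hT : IsTournament r) (hxy : x ≠ y) (v : V) :
    v = x ∨ v = y ∨ GoodV r x y v ∨ AV r x y v ∨ BV r x y v := by
  rcases eq_or_ne v x with rfl | hvx
  · exact Or.inl rfl
  rcases eq_or_ne v y with rfl | hvy
  · exact Or.inr (Or.inl rfl)
  rcases ttotal hT (Ne.symm hvx) with h1 | h1 <;> rcases ttotal hT (Ne.symm hvy) with h2 | h2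
  · exact Or.inr (Or.inr (Or.inr (Or.inl ⟨h1, h2⟩)))
  · exact Or.inr (Or.inr (Or.inl (Or.inl ⟨h1, h2⟩)))
  · exact Or.inr (Or.inr (Or.inl (Or.inr ⟨h2, h1⟩)))
  · exact Or.inr (Or.inr (Or.inr (Or.inr ⟨h1, h2⟩)))

lemma good_not_A (hT : IsTournament r) (v : V) (hg : GoodV r x y v) (ha : AV r x y v) : False := by
  rcases hg with ⟨h1, h2⟩ | ⟨h1, h2⟩
  · exact tasym hT h2 ha.2
  · exact tasym hT h2 ha.1
lemma good_not_B (hT : IsTournament r) (v : V) (hg : GoodV r x y v) (hb : BV r x y v) : False := by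
  rcases hg with ⟨h1, h2⟩ | ⟨h1, h2⟩
  · exact tasym hT h1 hb.1
  · exact tasym hT h1 hb.2
lemma A_not_B (hT : IsTournament r) (v : V) (ha : AV r x y v) (hb : BV r x y v) : False :=
  tasym hT ha.1 hb.1
lemma good_ne_xy (hT : IsTournament r) (v : V) (hg : GoodV r x y v) : v ≠ x ∧ v ≠ y := by
  rcases hg with ⟨h1, h2⟩ | ⟨h1, h2⟩
  · exact ⟨Ne.symm (tneq hT h1), tneq hT h2⟩
  · exact ⟨tneq hT h2, Ne.symm (tneq hT h1)⟩
lemma A_ne_xy (hT : IsTournament r) (v : V) (ha : AV r x y v) : v ≠ x ∧ v ≠ y :=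
  ⟨Ne.symm (tneq hT ha.1), Ne.symm (tneq hT ha.2)⟩
lemma B_ne_xy (hT : IsTournament r) (v : V) (hb : BV r x y v) : v ≠ x ∧ v ≠ y :=
  ⟨tneq hT hb.1, tneq hT hb.2⟩

lemma arcs_exist (hT : IsTournament r) (hstrong : KStrong r (2*k))
    (hcard : 2*k + 2 ≤ Fintype.card V) (hxy : x ≠ y) [DecidablePred (GoodV r x y)]
    (hgk : (Finset.univ.filter (GoodV r x y)).card < k) :
    ∀ j, j ≤ k - (Finset.univ.filter (GoodV r x y)).card →
    ∃ arcs : List (V × V), arcs.length = j ∧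
      (∀ pr ∈ arcs, AV r x y pr.1 ∧ BV r x y pr.2 ∧ r pr.1 pr.2) ∧
      arcs.Pairwise (fun pq rs => pq.1 ≠ rs.1 ∧ pq.1 ≠ rs.2 ∧ pq.2 ≠ rs.1 ∧ pq.2 ≠ rs.2) := by
  classical
  set Gf := Finset.univ.filter (GoodV r x y) with hGf
  set g := Gf.card with hg
  intro j
  induction j with
  | zero => intro _; exact ⟨[], rfl, by simp, by simp⟩
  | succ j ih =>
    intro hj
    obtain ⟨arcs, hlen, hmem, hpw⟩ := ih (by omega)
    set Cfst := (arcs.map Prod.fst).toFinset with hCfst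
    set Csnd := (arcs.map Prod.snd).toFinset with hCsnd
    set C := Cfst ∪ Csnd with hC
    have hCfst_le : Cfst.card ≤ j := le_trans (List.toFinset_card_le _) (by simp [hlen])
    have hCsnd_le : Csnd.card ≤ j := le_trans (List.toFinset_card_le _) (by simp [hlen])
    have hCA : ∀ v ∈ Cfst, AV r x y v := by
      intro v hv
      rw [hCfst, List.mem_toFinset] at hv
      obtain ⟨pr, hpr, rfl⟩ := List.mem_map.mp hv
      exact (hmem pr hpr).1
    have hCB : ∀ v ∈ Csnd, BV r x y v := by
      intro v hv
      rw [hCsnd, List.mem_toFinset] at hv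
      obtain ⟨pr, hpr, rfl⟩ := List.mem_map.mp hv
      exact (hmem pr hpr).2.1
    have hkey : ∃ a b, AV r x y a ∧ a ∉ C ∧ BV r x y b ∧ b ∉ C ∧ r a b := by
      by_contra hno
      push_neg at hno
      by_cases hBex : ∃ b, BV r x y b ∧ b ∉ C
      · obtain ⟨b₀, hb₀, hb₀C⟩ := hBex
        set S : Finset V := C ∪ Gf ∪ {y} with hS
        have hScard : S.card < 2*k := by
          have h1 : S.card ≤ C.card + g + 1 := by
            refine le_trans (Finset.card_union_le _ _) ?_
            simp only [Finset.card_singleton]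
            have := Finset.card_union_le C Gf
            omega
          have h2 : C.card ≤ 2*j := by
            rw [hC]
            have := Finset.card_union_le Cfst Csnd
            omega
          omega
        have hxS : x ∉ S := by
          rw [hS]
          simp only [Finset.mem_union, Finset.mem_singleton]
          push_neg
          refine ⟨⟨?_, ?_⟩, hxy⟩
          · rw [hC]
            simp only [Finset.mem_union]
            push_neg
            exact ⟨fun h => (A_ne_xy hT x (hCA x h)).1 rfl, fun h => (B_ne_xy hT x (hCB x h)).1 rfl⟩
          · rw [hGf]
            simp only [Finset.mem_filter, Finset.mem_univ, true_and]
            exact fun h => (good_ne_xy hT x h).1 rfl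
        have hbS : b₀ ∉ S := by
          rw [hS]
          simp only [Finset.mem_union, Finset.mem_singleton]
          push_neg
          refine ⟨⟨hb₀C, ?_⟩, (B_ne_xy hT b₀ hb₀).2⟩
          rw [hGf]
          simp only [Finset.mem_filter, Finset.mem_univ, true_and]
          exact fun h => good_not_B hT b₀ h hb₀
        have hpath := hstrong.2 ↑S (by rw [Set.ncard_coe_finset]; exact hScard) x b₀
          (by simpa using hxS) (by simpa using hbS)
        have hinv := rtg_invariant (fun v => v = x ∨ (AV r x y v ∧ v ∉ C)) ?_ hpath (Or.inl rfl)
        · rcases hinv with h | h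
          · exact (B_ne_xy hT b₀ hb₀).1 h
          · exact A_not_B hT b₀ h.1 hb₀
        · rintro a b ha ⟨haS, hbS2, hab⟩
          have hbC : b ∉ C := by
            intro h; exact hbS2 (by rw [hS]; simp [h])
          have hbG : ¬ GoodV r x y b := by
            intro h; exact hbS2 (by rw [hS, hGf]; simp [h])
          have hby : b ≠ y := by
            intro h; exact hbS2 (by rw [hS]; simp [h])
          rcases classify hT hxy b with rfl | rfl | h | h | h
          · exact Or.inl rfl
          · exact absurd rfl hby
          · exact absurd h hbG
          · exact Or.inr ⟨h, hbC⟩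
          · -- b ∈ B: contradiction
            exfalso
            rcases ha with rfl | ⟨haA, haC⟩
            · exact tasym hT hab h.1
            · exact hno a b haA haC h hbC hab
      · -- B ⊆ C, so B ⊆ Csnd, in-degree of y is small
        push_neg at hBex
        have hBsub : Finset.univ.filter (BV r x y) ⊆ Csnd := by
          intro b hb
          rw [Finset.mem_filter] at hb
          have hbC := hBex b hb.2
          rw [hC, Finset.mem_union] at hbC
          rcases hbC with h | h
          · exact absurd hb.2 (fun hh => A_not_B hT b (hCA b h) hh)
          · exact h
        have hNsub : Finset.univ.filter (fun v => r v y) ⊆ {x} ∪ Csnd ∪ Gf := by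
          intro v hv
          rw [Finset.mem_filter] at hv
          simp only [Finset.mem_union, Finset.mem_singleton]
          rcases classify hT hxy v with rfl | rfl | h | h | h
          · exact Or.inl (Or.inl rfl)
          · exact absurd hv.2 (hT.1 _)
          · exact Or.inr (by rw [hGf]; simp [h])
          · exact absurd hv.2 (tasym hT h.2)
          · exact Or.inl (Or.inr (hBsub (by simp [Finset.mem_filter, h])))
        have hNcard : (Finset.univ.filter (fun v => r v y)).card < 2*k := by
          have h1 := Finset.card_le_card hNsub
          have h2 : ({x} ∪ Csnd ∪ Gf : Finset V).card ≤ 1 + j + g := by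
            refine le_trans (Finset.card_union_le _ _) ?_
            have := Finset.card_union_le ({x} : Finset V) Csnd
            simp only [Finset.card_singleton] at this
            omega
          omega
        exact indeg_big hT hstrong hcard y hNcard
    obtain ⟨a, b, haA, haC, hbB, hbC, hab⟩ := hkey
    refine ⟨(a, b) :: arcs, by simp [hlen], ?_, ?_⟩
    · intro pr hpr
      rcases List.mem_cons.mp hpr with rfl | h
      · exact ⟨haA, hbB, hab⟩
      · exact hmem pr h
    · rw [List.pairwise_cons]
      refine ⟨?_, hpw⟩
      intro pr hpr
      have h1 : pr.1 ∈ Cfst := by rw [hCfst, List.mem_toFinset]; exact List.mem_map.mpr ⟨pr, hpr, rfl⟩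
      have h2 : pr.2 ∈ Csnd := by rw [hCsnd, List.mem_toFinset]; exact List.mem_map.mpr ⟨pr, hpr, rfl⟩
      have hfst : pr.1 ∈ C := by rw [hC]; simp [h1]
      have hsnd : pr.2 ∈ C := by rw [hC]; simp [h2]
      refine ⟨fun h => haC ?_, fun h => haC ?_, fun h => hbC ?_, fun h => hbC ?_⟩
      · rw [show a = pr.1 from h]; exact hfst
      · rw [show a = pr.2 from h]; exact hsnd
      · rw [show b = pr.1 from h]; exact hfst
      · rw [show b = pr.2 from h]; exact hsnd

end greedy

lemma dip3 (hT : IsTournament r) {a b c : V} (h1 : r a b) (h2 : r b c) (hac : a ≠ c) :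
    IsDipath r a c [a, b, c] := by
  refine ⟨?_, ?_, rfl, rfl⟩
  · rw [chain'_iff_isChain, List.isChain_cons_cons, List.isChain_cons_cons]
    exact ⟨h1, h2, List.isChain_singleton c⟩
  · simp [tneq hT h1, tneq hT h2, hac]

lemma dip4 (hT : IsTournament r) {a b c d : V} (h1 : r a b) (h2 : r b c) (h3 : r c d)
    (had : a ≠ d) (hbd : b ≠ d) (hac : a ≠ c) : IsDipath r a d [a, b, c, d] := by
  refine ⟨?_, ?_, rfl, rfl⟩
  · rw [chain'_iff_isChain, List.isChain_cons_cons, List.isChain_cons_cons, List.isChain_cons_cons]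
    exact ⟨h1, h2, h3, List.isChain_singleton d⟩
  · simp [tneq hT h1, tneq hT h2, tneq hT h3, hac, had, hbd]

end AuxStmt7

/-- For `k ≥ 1`, a `2k`-strong tournament with a directed path of
length 2 (in one direction or the other) between any two distinct vertices is
`(k+2)*`-weakly connected. -/
theorem stmt7 [Fintype V] (r : V → V → Prop) (hT : IsTournament r)
    (k : ℕ) (hk : 1 ≤ k) (hstrong : KStrong r (2 * k))
    (h2 : ∀ x y : V, x ≠ y → (∃ w : V, r x w ∧ r w y) ∨ (∃ w : V, r y w ∧ r w x))
    (x y : V) (hxy : x ≠ y) :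
    WeakStarContainer r x y (k + 2) := by
  classical
  have hcard := card_ge hT hstrong hk
  set Gf := Finset.univ.filter (GoodV r x y) with hGf
  have hg1 : 1 ≤ Gf.card := by
    have hw : ∃ w, GoodV r x y w := by
      rcases h2 x y hxy with ⟨w, hw⟩ | ⟨w, hw⟩
      · exact ⟨w, Or.inl hw⟩
      · exact ⟨w, Or.inr hw⟩
    obtain ⟨w, hw⟩ := hw
    exact Finset.card_pos.mpr ⟨w, by rw [hGf]; simp [hw]⟩
  obtain ⟨G₀, hG₀sub, hG₀card⟩ := Finset.exists_subset_card_eq (min_le_left Gf.card k)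
  set m := k - G₀.card with hm
  have hG₀k : G₀.card ≤ k := by rw [hG₀card]; exact min_le_right _ _
  have hG₀1 : 1 ≤ G₀.card := by rw [hG₀card]; exact le_min hg1 hk
  have hsum : G₀.card + m = k := by omega
  have harcs : ∃ arcs : List (V × V), arcs.length = m ∧
      (∀ pr ∈ arcs, AV r x y pr.1 ∧ BV r x y pr.2 ∧ r pr.1 pr.2) ∧
      arcs.Pairwise (fun pq rs => pq.1 ≠ rs.1 ∧ pq.1 ≠ rs.2 ∧ pq.2 ≠ rs.1 ∧ pq.2 ≠ rs.2) := by
    by_cases hc : Gf.card < k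
    · have hG₀eq : G₀ = Gf := by
        apply Finset.eq_of_subset_of_card_le hG₀sub
        rw [hG₀card, min_eq_left (le_of_lt hc)]
      have hmle : m ≤ k - Gf.card := by rw [hm, hG₀eq]
      exact arcs_exist hT hstrong hcard hxy (hGf ▸ hc) m (hGf ▸ hmle)
    · have hm0 : m = 0 := by
        push_neg at hc
        rw [hm, hG₀card, min_eq_right hc]
        omega
      exact ⟨[], by simp [hm0], by simp, by simp⟩
  obtain ⟨arcs, hlenm, hmemarcs, hpwarcs⟩ := harcs
  set Wf : Finset V := G₀ ∪ (arcs.map Prod.fst).toFinset ∪ (arcs.map Prod.snd).toFinset with hWf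
  have hG₀good : ∀ w ∈ G₀, GoodV r x y w := by
    intro w hw
    have := hG₀sub hw
    rw [hGf, Finset.mem_filter] at this
    exact this.2
  have hWmem : ∀ v ∈ Wf, GoodV r x y v ∨ AV r x y v ∨ BV r x y v := by
    intro v hv
    rw [hWf] at hv
    simp only [Finset.mem_union, List.mem_toFinset, List.mem_map] at hv
    rcases hv with (hv | ⟨pr, hpr, rfl⟩) | ⟨pr, hpr, rfl⟩
    · exact Or.inl (hG₀good v hv)
    · exact Or.inr (Or.inl (hmemarcs pr hpr).1)
    · exact Or.inr (Or.inr (hmemarcs pr hpr).2.1)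
  have hxW : x ∉ Wf := by
    intro h
    rcases hWmem x h with h | h | h
    · exact (good_ne_xy hT x h).1 rfl
    · exact (A_ne_xy hT x h).1 rfl
    · exact (B_ne_xy hT x h).1 rfl
  have hyW : y ∉ Wf := by
    intro h
    rcases hWmem y h with h | h | h
    · exact (good_ne_xy hT y h).2 rfl
    · exact (A_ne_xy hT y h).2 rfl
    · exact (B_ne_xy hT y h).2 rfl
  have hWcard : Wf.card < 2*k := by
    have h1 : Wf.card ≤ G₀.card + m + m := by
      rw [hWf]
      refine le_trans (Finset.card_union_le _ _) ?_
      have h2 := Finset.card_union_le G₀ (arcs.map Prod.fst).toFinset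
      have h3 : (arcs.map Prod.fst).toFinset.card ≤ m :=
        le_trans (List.toFinset_card_le _) (by simp [hlenm])
      have h4 : (arcs.map Prod.snd).toFinset.card ≤ m :=
        le_trans (List.toFinset_card_le _) (by simp [hlenm])
      omega
    omega
  have hsc := sub_strong hstrong Wf hWcard
  obtain ⟨P₁, P₂, hP₁, hP₂, hcover, hP₁W, hP₂W, hdisj12, hh1, hh2⟩ :=
    span_two_paths hT hsc hxW hyW hxy
  set mk2 : V → List V := fun w => if r x w then [x, w, y] else [y, w, x] with hmk2
  set mk3 : V × V → List V := fun pr => [x, pr.1, pr.2, y] with hmk3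
  set shorts := G₀.toList.map mk2 ++ arcs.map mk3 with hshorts
  set L := P₁ :: P₂ :: shorts with hL
  have hLlen : L.length = k + 2 := by
    rw [hL, hshorts]
    simp [hlenm, Finset.length_toList]
    omega
  -- membership of mk2 / mk3
  have hmk2mem : ∀ w v : V, v ∈ mk2 w ↔ (v = x ∨ v = y ∨ v = w) := by
    intro w v
    rw [hmk2]
    by_cases h : r x w <;> simp [h] <;> tauto
  have hmk3mem : ∀ (pr : V × V) (v : V), v ∈ mk3 pr ↔ (v = x ∨ v = y ∨ v = pr.1 ∨ v = pr.2) := by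
    intro pr v
    rw [hmk3]
    simp
    tauto
  have hmk2dip : ∀ w ∈ G₀, IsDipath r x y (mk2 w) ∨ IsDipath r y x (mk2 w) := by
    intro w hw
    rcases hG₀good w hw with ⟨ha, hb⟩ | ⟨ha, hb⟩
    · left
      simp only [hmk2]
      rw [if_pos ha]
      exact dip3 hT ha hb hxy
    · right
      have hnxw : ¬ r x w := tasym hT hb
      simp only [hmk2]
      rw [if_neg hnxw]
      exact dip3 hT ha hb (Ne.symm hxy)
  have hmk3dip : ∀ pr ∈ arcs, IsDipath r x y (mk3 pr) := by
    intro pr hpr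
    obtain ⟨hA, hB, hab⟩ := hmemarcs pr hpr
    simp only [hmk3]
    exact dip4 hT hA.1 hab hB.2 hxy (A_ne_xy hT _ hA).2 (Ne.symm (B_ne_xy hT _ hB).1)
  -- every short path contains an internal W-vertex
  have hshortW : ∀ p ∈ shorts, ∃ w ∈ p, w ∈ Wf ∧ w ≠ x ∧ w ≠ y := by
    intro p hp
    rw [hshorts, List.mem_append] at hp
    rcases hp with hp | hp
    · obtain ⟨w, hw, rfl⟩ := List.mem_map.mp hp
      rw [Finset.mem_toList] at hw
      refine ⟨w, (hmk2mem w w).mpr (Or.inr (Or.inr rfl)), ?_, good_ne_xy hT w (hG₀good w hw)⟩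
      rw [hWf]; simp [hw]
    · obtain ⟨pr, hpr, rfl⟩ := List.mem_map.mp hp
      refine ⟨pr.1, (hmk3mem pr pr.1).mpr (Or.inr (Or.inr (Or.inl rfl))), ?_,
        A_ne_xy hT _ (hmemarcs pr hpr).1⟩
      rw [hWf]
      simp only [Finset.mem_union, List.mem_toFinset, List.mem_map]
      exact Or.inl (Or.inr ⟨pr, hpr, rfl⟩)
  have hshortSub : ∀ p ∈ shorts, ∀ v ∈ p, v = x ∨ v = y ∨ v ∈ Wf := by
    intro p hp v hv
    rw [hshorts, List.mem_append] at hp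
    rcases hp with hp | hp
    · obtain ⟨w, hw, rfl⟩ := List.mem_map.mp hp
      rw [Finset.mem_toList] at hw
      rcases (hmk2mem w v).mp hv with h | h | h
      · exact Or.inl h
      · exact Or.inr (Or.inl h)
      · subst h; exact Or.inr (Or.inr (by rw [hWf]; simp [hw]))
    · obtain ⟨pr, hpr, rfl⟩ := List.mem_map.mp hp
      rcases (hmk3mem pr v).mp hv with h | h | h | h
      · exact Or.inl h
      · exact Or.inr (Or.inl h)
      · subst h
        refine Or.inr (Or.inr ?_)
        rw [hWf]
        simp only [Finset.mem_union, List.mem_toFinset, List.mem_map]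
        exact Or.inl (Or.inr ⟨pr, hpr, rfl⟩)
      · subst h
        refine Or.inr (Or.inr ?_)
        rw [hWf]
        simp only [Finset.mem_union, List.mem_toFinset, List.mem_map]
        exact Or.inr ⟨pr, hpr, rfl⟩
  -- pairwise internal disjointness on L
  have hPdisj : ∀ P : List V, (∀ v ∈ P, v ∉ Wf) → ∀ q ∈ shorts, ∀ w, w ∈ P → w ∈ q → w = x ∨ w = y := by
    intro P hPW q hq w hwP hwq
    rcases hshortSub q hq w hwq with h | h | h
    · exact Or.inl h
    · exact Or.inr h
    · exact absurd h (hPW w hwP)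
  have hshortsPW : shorts.Pairwise (fun p q => ∀ w, w ∈ p → w ∈ q → w = x ∨ w = y) := by
    rw [hshorts, List.pairwise_append]
    refine ⟨?_, ?_, ?_⟩
    · rw [List.pairwise_map]
      have hnd : G₀.toList.Pairwise (· ≠ ·) := Finset.nodup_toList G₀
      refine hnd.imp ?_
      intro w w' hne v hv1 hv2
      rcases (hmk2mem w v).mp hv1 with h | h | h
      · exact Or.inl h
      · exact Or.inr h
      · rcases (hmk2mem w' v).mp hv2 with h' | h' | h'
        · exact Or.inl h'
        · exact Or.inr h'
        · exact (hne (h.symm.trans h')).elim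
    · rw [List.pairwise_map]
      refine hpwarcs.imp ?_
      intro pq rs hne v hv1 hv2
      rcases (hmk3mem pq v).mp hv1 with h | h | h | h
      · exact Or.inl h
      · exact Or.inr h
      · rcases (hmk3mem rs v).mp hv2 with h' | h' | h' | h'
        · exact Or.inl h'
        · exact Or.inr h'
        · exact (hne.1 (h.symm.trans h')).elim
        · exact (hne.2.1 (h.symm.trans h')).elim
      · rcases (hmk3mem rs v).mp hv2 with h' | h' | h' | h'
        · exact Or.inl h'
        · exact Or.inr h'
        · exact (hne.2.2.1 (h.symm.trans h')).elim
        · exact (hne.2.2.2 (h.symm.trans h')).elim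
    · intro p hp q hq
      obtain ⟨w, hw, rfl⟩ := List.mem_map.mp hp
      obtain ⟨pr, hpr, rfl⟩ := List.mem_map.mp hq
      rw [Finset.mem_toList] at hw
      intro v hv1 hv2
      rcases (hmk2mem w v).mp hv1 with h | h | h
      · exact Or.inl h
      · exact Or.inr h
      rcases (hmk3mem pr v).mp hv2 with h' | h' | h' | h'
      · exact Or.inl h'
      · exact Or.inr h'
      · exact absurd (hG₀good w hw) (fun hg => good_not_A hT w hg
          (by rw [show w = pr.1 from h.symm.trans h']; exact (hmemarcs pr hpr).1))
      · exact absurd (hG₀good w hw) (fun hg => good_not_B hT w hg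
          (by rw [show w = pr.2 from h.symm.trans h']; exact (hmemarcs pr hpr).2.1))
  have hLPW : L.Pairwise (fun p q => ∀ w, w ∈ p → w ∈ q → w = x ∨ w = y) := by
    rw [hL, List.pairwise_cons, List.pairwise_cons]
    refine ⟨?_, ?_, hshortsPW⟩
    · intro q hq
      rcases List.mem_cons.mp hq with rfl | hq
      · exact hdisj12
      · exact hPdisj P₁ hP₁W q hq
    · intro q hq
      exact hPdisj P₂ hP₂W q hq
  have hLnodup : L.Nodup := by
    rw [hL]
    rw [List.nodup_cons, List.nodup_cons]
    refine ⟨?_, ?_, ?_⟩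
    · intro h
      rcases List.mem_cons.mp h with h | h
      · rw [h] at hh1; rw [hh1] at hh2; exact hxy (Option.some_inj.mp hh2)
      · obtain ⟨w, hw, hwW, -, -⟩ := hshortW P₁ h
        exact hP₁W w hw hwW
    · intro h
      obtain ⟨w, hw, hwW, -, -⟩ := hshortW P₂ h
      exact hP₂W w hw hwW
    · refine hshortsPW.imp_of_mem ?_
      intro p q hp hq hdis heq
      obtain ⟨w, hw, hwW, hwx, hwy⟩ := hshortW p hp
      rcases hdis w hw (heq ▸ hw) with h | h
      · exact hwx h
      · exact hwy h
  have hLdir : ∀ p ∈ L, IsDipath r x y p ∨ IsDipath r y x p := by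
    intro p hp
    rw [hL] at hp
    rcases List.mem_cons.mp hp with rfl | hp
    · exact Or.inl hP₁
    rcases List.mem_cons.mp hp with rfl | hp
    · exact Or.inr hP₂
    rw [hshorts, List.mem_append] at hp
    rcases hp with hp | hp
    · obtain ⟨w, hw, rfl⟩ := List.mem_map.mp hp
      exact hmk2dip w (Finset.mem_toList.mp hw)
    · obtain ⟨pr, hpr, rfl⟩ := List.mem_map.mp hp
      exact Or.inl (hmk3dip pr hpr)
  have hLcov : ∀ w : V, ∃ p ∈ L, w ∈ p := by
    intro w
    by_cases hw : w ∈ Wf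
    · rw [hWf] at hw
      simp only [Finset.mem_union, List.mem_toFinset, List.mem_map] at hw
      rcases hw with (hw | ⟨pr, hpr, rfl⟩) | ⟨pr, hpr, rfl⟩
      · refine ⟨mk2 w, ?_, (hmk2mem w w).mpr (Or.inr (Or.inr rfl))⟩
        rw [hL]
        refine List.mem_cons.mpr (Or.inr (List.mem_cons.mpr (Or.inr ?_)))
        rw [hshorts]
        exact List.mem_append_left _ (List.mem_map.mpr ⟨w, Finset.mem_toList.mpr hw, rfl⟩)
      · refine ⟨mk3 pr, ?_, (hmk3mem pr pr.1).mpr (Or.inr (Or.inr (Or.inl rfl)))⟩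
        rw [hL]
        refine List.mem_cons.mpr (Or.inr (List.mem_cons.mpr (Or.inr ?_)))
        rw [hshorts]
        exact List.mem_append_right _ (List.mem_map.mpr ⟨pr, hpr, rfl⟩)
      · refine ⟨mk3 pr, ?_, (hmk3mem pr pr.2).mpr (Or.inr (Or.inr (Or.inr rfl)))⟩
        rw [hL]
        refine List.mem_cons.mpr (Or.inr (List.mem_cons.mpr (Or.inr ?_)))
        rw [hshorts]
        exact List.mem_append_right _ (List.mem_map.mpr ⟨pr, hpr, rfl⟩)
    · rcases hcover w hw with h | h
      · exact ⟨P₁, by rw [hL]; simp, h⟩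
      · exact ⟨P₂, by rw [hL]; simp, h⟩
  -- final packaging
  refine ⟨fun i => L.get (Fin.cast hLlen.symm i), ?_, ?_, ?_, ?_⟩
  · intro i j hij
    have := List.nodup_iff_injective_get.mp hLnodup hij
    exact Fin.cast_injective _ this
  · intro i
    exact hLdir _ (L.get_mem _)
  · intro i j hij w hwi hwj
    have hne : Fin.cast hLlen.symm i ≠ Fin.cast hLlen.symm j := by
      intro h; exact hij (Fin.cast_injective _ h)
    rcases lt_or_gt_of_ne hne with h | h
    · exact List.pairwise_iff_get.mp hLPW _ _ h w hwi hwj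
    · rcases List.pairwise_iff_get.mp hLPW _ _ h w hwj hwi with h' | h'
      · exact Or.inl h'
      · exact Or.inr h'
  · intro w
    obtain ⟨p, hp, hwp⟩ := hLcov w
    obtain ⟨n, hn⟩ := List.mem_iff_get.mp hp
    refine ⟨Fin.cast hLlen n, ?_⟩
    show w ∈ L.get n
    rw [hn]
    exact hwp
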